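/- arXiv:1304.4626 — 2 statements merged into one kernel-verified Lean document; each statement's English description precedes it below -/
import Mathlib

section
/- Let T be a finite tree rooted at a vertex r, and let W ⊆ V(T) be a nonempty set of vertices such that for every pair of vertices in W their least common ancestor is also in W. Let X be a set of vertices containing exactly one leaf of T from each connected component U of T − W with |N_T(U)| = 1. Then: for every connected component U of T − W with |N_T(U)| = 1 there exist x ∈ W and y ∈ X such that U = C^{xy} ∪ {y}; and for every connected component U of T − W with |N_T(U)| = 2 there exist x, y ∈ W such that U = C^{xy}. -/
/-- The neighborhood `N_G(U)`: vertices outside `U` adjacent to some vertex of `U`. -/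
def Nbhd {V : Type*} (G : SimpleGraph V) (U : Set V) : Set V :=
  {v | v ∉ U ∧ ∃ u ∈ U, G.Adj u v}

/-- `U` is a connected component of `G − W`: `U` is a nonempty set of vertices disjoint
from `W`, inducing a connected subgraph, and every neighbor of `U` outside `U` lies
in `W`. -/
def IsCompOutside {V : Type*} (G : SimpleGraph V) (W U : Set V) : Prop :=
  U.Nonempty ∧ Disjoint U W ∧ (SimpleGraph.induce U G).Connected ∧
    ∀ u ∈ U, ∀ v : V, G.Adj u v → v ∉ U → v ∈ W

/-- In the graph `T` rooted at `r`, the vertex `a` is an ancestor of `v`: `a` lies on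
a (in a tree: the unique) path from `v` to `r`. -/
def IsAncestor {V : Type*} (T : SimpleGraph V) (r a v : V) : Prop :=
  ∃ p : T.Walk v r, p.IsPath ∧ a ∈ p.support

/-- In the graph `T` rooted at `r`, the vertex `a` is a least common ancestor of `u` and
`v`: it is a common ancestor of `u` and `v` that is farthest from the root `r`. -/
def IsLCA {V : Type*} (T : SimpleGraph V) (r u v a : V) : Prop :=
  IsAncestor T r a u ∧ IsAncestor T r a v ∧
    ∀ b : V, IsAncestor T r b u → IsAncestor T r b v → T.dist r b ≤ T.dist r a

/-- `C` is the set `C^{xy}` associated to the pair `x, y`: the empty set if `x` and `y` are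
adjacent, and otherwise the (unique) connected component of `T − {x, y}` whose neighborhood
is exactly `{x, y}`. -/
def IsCxy {V : Type*} (T : SimpleGraph V) (x y : V) (C : Set V) : Prop :=
  (T.Adj x y ∧ C = ∅) ∨
    (¬ T.Adj x y ∧ IsCompOutside T {x, y} C ∧ Nbhd T C = {x, y})


open SimpleGraph

lemma reach_in_induce {V : Type*} {T : SimpleGraph V} {U : Set V} {u v : V}
    (p : T.Walk u v) (hs : ∀ z ∈ p.support, z ∈ U) (hu : u ∈ U) (hv : v ∈ U) :
    (SimpleGraph.induce U T).Reachable ⟨u, hu⟩ ⟨v, hv⟩ := by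
  induction p with
  | nil => exact SimpleGraph.Reachable.refl _
  | @cons a b c h p ih =>
    have hb : b ∈ U := hs b (by simp)
    have h1 : (SimpleGraph.induce U T).Adj ⟨a, hu⟩ ⟨b, hb⟩ := h
    exact h1.reachable.trans (ih (fun z hz => hs z (by simp [hz])) hb hv)

lemma exists_path_in_set {V : Type*} {T : SimpleGraph V} {U : Set V}
    (hconn : (SimpleGraph.induce U T).Connected) {u v : V} (hu : u ∈ U) (hv : v ∈ U) :
    ∃ p : T.Walk u v, p.IsPath ∧ ∀ z ∈ p.support, z ∈ U := by
  classical
  obtain ⟨q⟩ := hconn.preconnected ⟨u, hu⟩ ⟨v, hv⟩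
  let q' : T.Walk u v := q.map (SimpleGraph.Embedding.induce U).toHom
  refine ⟨q'.bypass, q'.bypass_isPath, fun z hz => ?_⟩
  have hz' := q'.support_bypass_subset hz
  replace hz' : z ∈ q.support.map (SimpleGraph.Embedding.induce U).toHom :=
    (SimpleGraph.Walk.support_map _ _) ▸ hz'
  obtain ⟨⟨z', hz'U⟩, _, rfl⟩ := List.mem_map.mp hz'
  exact hz'U

lemma leaf_not_internal {V : Type*} {T : SimpleGraph V} {y w u v : V}
    (hnb : ∀ a, T.Adj y a → a = w) (p : T.Walk u v) (hp : p.IsPath)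
    (hyu : y ≠ u) (hyv : y ≠ v) : y ∉ p.support := by
  classical
  intro hy
  have hspec := SimpleGraph.Walk.take_spec p hy
  obtain ⟨a, ha, q2', hq2⟩ := SimpleGraph.Walk.exists_eq_cons_of_ne hyv (p.dropUntil y hy)
  obtain ⟨b, hb, q1', hq1⟩ := SimpleGraph.Walk.exists_eq_cons_of_ne hyu (p.takeUntil y hy).reverse
  have hw1 : w ∈ (p.takeUntil y hy).support := by
    have : w ∈ (p.takeUntil y hy).reverse.support := by
      rw [hq1, SimpleGraph.Walk.support_cons]
      exact List.mem_cons_of_mem _ ((hnb b hb) ▸ q1'.start_mem_support)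
    rwa [SimpleGraph.Walk.support_reverse, List.mem_reverse] at this
  have hw2 : w ∈ (p.dropUntil y hy).support.tail := by
    rw [hq2, SimpleGraph.Walk.support_cons]
    exact (hnb a ha) ▸ q2'.start_mem_support
  have hnd := hp.support_nodup
  rw [← hspec, SimpleGraph.Walk.support_append] at hnd
  exact (List.disjoint_of_nodup_append hnd) hw1 hw2

/-- Let `T` be a finite tree rooted at `r`, let `W` be a nonempty set of
vertices closed under taking least common ancestors, and let `X` contain exactly one leaf
of `T` from each connected component `U` of `T − W` with `|N_T(U)| = 1`. Then every
component `U` of `T − W` with `|N_T(U)| = 1` equals `C^{xy} ∪ {y}` for some `x ∈ W`,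
`y ∈ X`, and every component `U` with `|N_T(U)| = 2` equals `C^{xy}` for some `x, y ∈ W`. -/
theorem stmt18 {V : Type*} [Fintype V] (T : SimpleGraph V) (hT : T.IsTree) (r : V)
    (W : Set V) (hne : W.Nonempty)
    (hclosed : ∀ u ∈ W, ∀ v ∈ W, ∀ a : V, IsLCA T r u v a → a ∈ W)
    (X : Set V)
    (hX : ∀ U : Set V, IsCompOutside T W U → (Nbhd T U).ncard = 1 →
      ∃ y, y ∈ X ∧ y ∈ U ∧ (T.neighborSet y).ncard = 1 ∧ ∀ z ∈ X ∩ U, z = y) :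
    (∀ U : Set V, IsCompOutside T W U → (Nbhd T U).ncard = 1 →
      ∃ x ∈ W, ∃ y ∈ X, ∃ C : Set V, IsCxy T x y C ∧ U = C ∪ {y}) ∧
    (∀ U : Set V, IsCompOutside T W U → (Nbhd T U).ncard = 2 →
      ∃ x ∈ W, ∃ y ∈ W, ∃ C : Set V, IsCxy T x y C ∧ U = C) := by
  classical
  constructor
  · -- Part 1
    intro U hU hcard
    obtain ⟨hUne, hdisj, hconn, hbd⟩ := hU
    obtain ⟨x, hNx⟩ := Set.ncard_eq_one.mp hcard
    have hxN : x ∈ Nbhd T U := by rw [hNx]; rfl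
    obtain ⟨hxU, u0, hu0, hadj0⟩ := hxN
    have hxW : x ∈ W := hbd u0 hu0 x hadj0 hxU
    obtain ⟨y, hyX, hyU, hleaf, -⟩ := hX U ⟨hUne, hdisj, hconn, hbd⟩ hcard
    obtain ⟨w, hw⟩ := Set.ncard_eq_one.mp hleaf
    have hnb : ∀ a, T.Adj y a → a = w := by
      intro a ha
      have : a ∈ T.neighborSet y := ha
      rw [hw] at this; exact this
    have hyw : T.Adj y w := by
      have : w ∈ T.neighborSet y := by rw [hw]; rfl
      exact this
    by_cases hadj : T.Adj x y
    · -- case A: U = {y}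
      have hxw : x = w := hnb x hadj.symm
      have hUy : U = {y} := by
        ext u; simp only [Set.mem_singleton_iff]
        constructor
        · intro hu; by_contra hne'
          have hyu : y ≠ u := fun h => hne' h.symm
          obtain ⟨p, hp, hps⟩ := exists_path_in_set hconn hyU hu
          obtain ⟨a, ha, p', rfl⟩ := SimpleGraph.Walk.exists_eq_cons_of_ne hyu p
          have haU : a ∈ U := hps a (by simp)
          rw [hnb a ha, ← hxw] at haU
          exact hxU haU
        · intro hu; rw [hu]; exact hyU
      exact ⟨x, hxW, y, hyX, ∅, Or.inl ⟨hadj, rfl⟩, by rw [hUy]; simp⟩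
    · -- case B: C = U \ {y}
      set C : Set V := U \ {y} with hCdef
      have hCne : C.Nonempty := by
        rw [Set.nonempty_iff_ne_empty]
        intro h
        have hsub : U ⊆ {y} := Set.diff_eq_empty.mp h
        have hUy : U = {y} := Set.Subset.antisymm hsub (by simpa using hyU)
        have hwN : w ∈ Nbhd T U := by
          refine ⟨?_, y, hyU, hyw⟩
          rw [hUy]; simpa using hyw.ne'
        rw [hNx] at hwN
        exact hadj (hwN ▸ hyw).symm
      obtain ⟨u1, hu1⟩ := id hCne
      have hwU : w ∈ U := by
        obtain ⟨p, hp, hps⟩ := exists_path_in_set hconn hyU hu1.1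
        have hyu1 : y ≠ u1 := fun h => hu1.2 (by simp [← h])
        obtain ⟨a, ha, p', rfl⟩ := SimpleGraph.Walk.exists_eq_cons_of_ne hyu1 p
        exact (hnb a ha) ▸ hps a (by simp)
      have hwC : w ∈ C := ⟨hwU, by simpa using hyw.ne'⟩
      have hCconn : (SimpleGraph.induce C T).Connected := by
        rw [SimpleGraph.connected_iff]
        refine ⟨?_, Set.nonempty_coe_sort.mpr hCne⟩
        rintro ⟨a, haC⟩ ⟨b, hbC⟩
        obtain ⟨p, hp, hps⟩ := exists_path_in_set hconn haC.1 hbC.1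
        have hynp : y ∉ p.support :=
          leaf_not_internal hnb p hp (fun h => haC.2 (by simp [← h]))
            (fun h => hbC.2 (by simp [← h]))
        exact reach_in_induce (U := C) p (fun z hz => ⟨hps z hz, fun h => hynp (by rw [Set.mem_singleton_iff] at h; rwa [h] at hz)⟩)
          haC hbC
      have hu0y : u0 ≠ y := by
        intro h; rw [h] at hadj0
        exact hadj (by rw [hnb x hadj0]; exact hyw.symm)
      have hNC : Nbhd T C = {x, y} := by
        ext v
        simp only [Set.mem_insert_iff, Set.mem_singleton_iff]
        constructor
        · rintro ⟨hvC, u, huC, huv⟩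
          by_cases hvU : v ∈ U
          · right
            by_contra hvy
            exact hvC ⟨hvU, hvy⟩
          · left
            have : v ∈ Nbhd T U := ⟨hvU, u, huC.1, huv⟩
            rw [hNx] at this; exact this
        · rintro (rfl | rfl)
          · exact ⟨fun h => hxU h.1, u0, ⟨hu0, by simpa using hu0y⟩, hadj0⟩
          · exact ⟨fun h => h.2 rfl, w, hwC, hyw.symm⟩
      refine ⟨x, hxW, y, hyX, C, Or.inr ⟨hadj, ⟨hCne, ?_, hCconn, ?_⟩, hNC⟩, ?_⟩
      · rw [Set.disjoint_left]
        rintro z hzC (rfl | rfl)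
        · exact hxU hzC.1
        · exact hzC.2 rfl
      · intro u huC v huv hvC
        have : v ∈ Nbhd T C := ⟨hvC, u, huC, huv⟩
        rw [hNC] at this; exact this
      · rw [hCdef, Set.diff_union_self]
        exact (Set.union_eq_self_of_subset_right (by simpa using hyU)).symm
  · -- Part 2
    intro U hU hcard
    obtain ⟨hUne, hdisj, hconn, hbd⟩ := hU
    obtain ⟨x, y, hxy, hN⟩ := Set.ncard_eq_two.mp hcard
    have hxN : x ∈ Nbhd T U := by rw [hN]; exact Or.inl rfl
    have hyN : y ∈ Nbhd T U := by rw [hN]; exact Or.inr rfl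
    obtain ⟨hxU, u, hu, hux⟩ := hxN
    obtain ⟨hyU, u', hu', huy⟩ := hyN
    have hxW : x ∈ W := hbd u hu x hux hxU
    have hyW : y ∈ W := hbd u' hu' y huy hyU
    have hnadj : ¬ T.Adj x y := by
      intro hadj
      obtain ⟨p, hp, hps⟩ := exists_path_in_set hconn hu hu'
      have hbr := (SimpleGraph.isAcyclic_iff_forall_adj_isBridge.mp hT.IsAcyclic) hadj
      rw [SimpleGraph.isBridge_iff_adj_and_forall_walk_mem_edges] at hbr
      have hmem := hbr (SimpleGraph.Walk.cons hux.symm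
        (p.append (SimpleGraph.Walk.cons huy SimpleGraph.Walk.nil)))
      simp only [SimpleGraph.Walk.edges_cons, SimpleGraph.Walk.edges_append,
        SimpleGraph.Walk.edges_nil, List.mem_cons, List.mem_append, List.mem_singleton] at hmem
      rcases hmem with h1 | h2 | h3
      · rw [Sym2.eq_iff] at h1
        rcases h1 with ⟨-, h⟩ | ⟨h, -⟩
        · exact hyU (h.symm ▸ hu)
        · exact hxU (h.symm ▸ hu)
      · exact hxU (hps x (p.fst_mem_support_of_mem_edges h2))
      · rw [Sym2.eq_iff] at h3
        rcases h3 with (⟨h, -⟩ | ⟨h, -⟩) | h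
        · exact hxU (h.symm ▸ hu')
        · exact hxy h
        · simp at h
    refine ⟨x, hxW, y, hyW, U, Or.inr ⟨hnadj, ⟨hUne, ?_, hconn, ?_⟩, hN⟩, rfl⟩
    · rw [Set.disjoint_left]
      rintro z hz (rfl | rfl)
      · exact hxU hz
      · exact hyU hz
    · intro a ha v hav hvU
      have : v ∈ Nbhd T U := ⟨hvU, a, ha, hav⟩
      rw [hN] at this; exact this
end

section
/- For all integers k ≥ 1 and all integers p with 0 ≤ p < k, the inequality C(k, p) · (k / (k − p))^{k − p} ≤ 2.851^k holds, where C(k, p) denotes the binomial coefficient. -/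
open Real Finset

private lemma exp_lb : (1.7328912 : ℝ) ≤ Real.exp 0.5499 := by
  have h := Real.sum_le_exp_of_nonneg (x := 0.5499) (by norm_num) 7
  refine le_trans ?_ h
  rw [show (7:ℕ) = 6+1 by rfl]
  rw [Finset.sum_range_succ, Finset.sum_range_succ, Finset.sum_range_succ,
    Finset.sum_range_succ, Finset.sum_range_succ, Finset.sum_range_succ,
    Finset.sum_range_succ, Finset.sum_range_zero]
  norm_num [Nat.factorial]

private lemma hA : 1 - Real.log 0.5503 + 2 * Real.log 0.4499 ≤ 0 := by
  have h1 : Real.exp 1 * (0.4499:ℝ)^2 ≤ 0.5503 := by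
    nlinarith [Real.exp_one_lt_d9]
  have h2 : Real.log (Real.exp 1 * (0.4499:ℝ)^2) ≤ Real.log 0.5503 :=
    Real.log_le_log (by positivity) h1
  rw [Real.log_mul (by positivity) (by norm_num), Real.log_exp, Real.log_pow] at h2
  push_cast at h2
  linarith

private lemma hB : (0.5503:ℝ) + 2*0.4499 - 2 - 2 * Real.log 0.4499 ≤ Real.log 2.851 := by
  have hd2 : (0:ℝ) < 2.851 * 0.4499^2 := by norm_num
  have h1 : Real.exp (-0.5499) ≤ 2.851 * (0.4499:ℝ)^2 := by
    rw [Real.exp_neg]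
    have h2 : (0:ℝ) < 1.7328912 := by norm_num
    have := inv_anti₀ h2 exp_lb
    refine this.trans ?_
    norm_num
  have h3 : (-0.5499:ℝ) ≤ Real.log (2.851 * 0.4499^2) :=
    (Real.le_log_iff_exp_le hd2).2 h1
  rw [Real.log_mul (by norm_num) (by norm_num), Real.log_pow] at h3
  push_cast at h3
  linarith

/-- tangent-line bound: for `0 < x` and `0 < c`, `x * (log c + log K - log x) ≤ c*K - x`. -/
private lemma tangent {c K x : ℝ} (hc : 0 < c) (hK : 0 < K) (hx : 0 < x) :
    x * (Real.log c + Real.log K - Real.log x) ≤ c * K - x := by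
  have h := Real.log_le_sub_one_of_pos (x := c * K / x) (by positivity)
  have hlog : Real.log (c * K / x) = Real.log c + Real.log K - Real.log x := by
    rw [Real.log_div (by positivity) hx.ne', Real.log_mul hc.ne' hK.ne']
  rw [hlog] at h
  have h2 := mul_le_mul_of_nonneg_left h hx.le
  have h3 : x * (c * K / x - 1) = c * K - x := by field_simp
  linarith [h2, h3.le]

/-- For all integers `k ≥ 1` and `0 ≤ p < k`,
`C(k, p) · (k/(k − p))^(k − p) ≤ 2.851^k`. -/
theorem stmt19 (k p : ℕ) (hk : 1 ≤ k) (hp : p < k) :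
    (Nat.choose k p : ℝ) * ((k : ℝ) / ((k : ℝ) - (p : ℝ))) ^ (k - p) ≤ (2.851 : ℝ) ^ k := by
  have hK0 : (0:ℝ) < (k:ℝ) := Nat.cast_pos.2 hk
  rcases Nat.eq_zero_or_pos p with h0 | hp1
  · subst h0
    simp only [Nat.choose_zero_right, Nat.cast_one, Nat.cast_zero, sub_zero, Nat.sub_zero,
      one_mul, div_self hK0.ne']
    simp only [one_pow]
    exact one_le_pow₀ (by norm_num)
  · -- main case: 1 ≤ p < k
    set q : ℕ := k - p with hqdef
    have hq1 : 1 ≤ q := by omega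
    have hpq : p + q = k := by omega
    have hP0 : (0:ℝ) < (p:ℝ) := Nat.cast_pos.2 hp1
    have hQ0 : (0:ℝ) < (q:ℝ) := Nat.cast_pos.2 hq1
    have hKPQ : (k:ℝ) = (p:ℝ) + (q:ℝ) := by exact_mod_cast (hpq.symm ▸ rfl : (k:ℕ) = p + q)
    have hsub : (k:ℝ) - (p:ℝ) = (q:ℝ) := by linarith
    rw [hsub]
    -- Step A: binomial bound
    have hbin : (Nat.choose k p : ℝ) * (p:ℝ)^p * (q:ℝ)^q ≤ (k:ℝ)^k := by
      have hexp : ((p:ℝ) + (q:ℝ))^k =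
          ∑ i ∈ Finset.range (k+1), (p:ℝ)^i * (q:ℝ)^(k-i) * (Nat.choose k i : ℝ) :=
        add_pow (p:ℝ) (q:ℝ) k
      have hmem : p ∈ Finset.range (k+1) := Finset.mem_range.2 (by omega)
      have hsingle := Finset.single_le_sum
        (f := fun i => (p:ℝ)^i * (q:ℝ)^(k-i) * (Nat.choose k i : ℝ))
        (fun i _ => by positivity) hmem
      rw [hKPQ]
      rw [hexp]
      calc (Nat.choose k p : ℝ) * (p:ℝ)^p * (q:ℝ)^q
          = (p:ℝ)^p * (q:ℝ)^(k-p) * (Nat.choose k p : ℝ) := by rw [← hqdef]; ring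
        _ ≤ _ := hsingle
    -- Step B: the key exponential inequality via logs
    have hmain : (k:ℝ)^(k+q) ≤ (2.851:ℝ)^k * ((p:ℝ)^p * (q:ℝ)^(2*q)) := by
      have hposL : (0:ℝ) < (k:ℝ)^(k+q) := by positivity
      have hposR : (0:ℝ) < (2.851:ℝ)^k * ((p:ℝ)^p * (q:ℝ)^(2*q)) := by positivity
      rw [← Real.log_le_log_iff hposL hposR]
      rw [Real.log_pow, Real.log_mul (by positivity) (by positivity),
        Real.log_mul (by positivity) (by positivity), Real.log_pow, Real.log_pow, Real.log_pow]
      push_cast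
      have h1 := tangent (c := 0.5503) (K := (k:ℝ)) (x := (p:ℝ)) (by norm_num) hK0 hP0
      have h2 := tangent (c := 0.4499) (K := (k:ℝ)) (x := (q:ℝ)) (by norm_num) hK0 hQ0
      have hA' : (p:ℝ) * (1 - Real.log 0.5503 + 2 * Real.log 0.4499) ≤ 0 :=
        mul_nonpos_of_nonneg_of_nonpos hP0.le hA
      have hB' : (k:ℝ) * ((0.5503:ℝ) + 2*0.4499 - 2 - 2 * Real.log 0.4499)
          ≤ (k:ℝ) * Real.log 2.851 := mul_le_mul_of_nonneg_left hB hK0.le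
      have hsum1 : ((k:ℝ) + (q:ℝ)) * Real.log (k:ℝ)
          = (p:ℝ) * Real.log (k:ℝ) + 2 * ((q:ℝ) * Real.log (k:ℝ)) := by rw [hKPQ]; ring
      have hsum2 : (k:ℝ) * Real.log 0.4499
          = (p:ℝ) * Real.log 0.4499 + (q:ℝ) * Real.log 0.4499 := by rw [hKPQ]; ring
      linarith [h1, h2, hA', hB', hsum1, hsum2]
    -- Step C: combine
    have hQq : (0:ℝ) < (q:ℝ)^q := by positivity
    rw [div_pow, mul_div_assoc', div_le_iff₀ (by positivity)]
    have hcancel : (0:ℝ) < (p:ℝ)^p * (q:ℝ)^q := by positivity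
    refine le_of_mul_le_mul_right ?_ hcancel
    have step1 : (Nat.choose k p : ℝ) * (p:ℝ)^p * (q:ℝ)^q * (k:ℝ)^q ≤ (k:ℝ)^(k+q) := by
      rw [pow_add]
      exact mul_le_mul_of_nonneg_right hbin (by positivity)
    have h2q : (q:ℝ)^(2*q) = (q:ℝ)^q * (q:ℝ)^q := by rw [two_mul, pow_add]
    rw [h2q] at hmain
    nlinarith [step1.trans hmain]
end
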